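/- Monotonicity of the MBS threshold of the suboptimal policy (Theorem 2, Property 2, second part): let V̂_{n,m} : {0,…,N_{n,m}} → ℝ be non-decreasing for every (n,m) ∈ I and set V̂(Q) = Σ_{(n,m)∈I} V̂_{n,m}(Q_{n,m}). Let û* ∈ 𝒰 satisfy û*_0 = m for some content m ∈ M_0. If two partial states Q¹_{−0,−m} and Q²_{−0,−m} (coordinates of I other than (0,m)) satisfy Q¹_{n,m} ≥ Q²_{n,m} for every n ∈ N_m and agree on all other coordinates, then φ̂_{û*}⁻(Q¹_{−0,−m}) ≤ φ̂_{û*}⁻(Q²_{−0,−m}) (in {0,…,N_{0,m}} ∪ {+∞}); i.e., the MBS scheduling threshold φ̂_{û*}⁻(Q_{−0,−m}) is monotonically non-increasing in Q_{n,m} for every n ∈ N_m. -/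

import Mathlib

open Finset

namespace HetNet

/-- The queue index set `I = {(n,m) : 0 ≤ n ≤ N, m ∈ M_n}`. -/
abbrev Idx {N M : ℕ} (cache : Fin (N + 1) → Finset (Fin M)) : Type :=
  {p : Fin (N + 1) × Fin M // p.2 ∈ cache p.1}

/-- The feasible action space `𝒰`: each BS schedules a cached content or idles (`none`),
and the MBS (BS `0`) and the SBSs do not operate concurrently. -/
def Feasible {N M : ℕ} (cache : Fin (N + 1) → Finset (Fin M))
    (u : Fin (N + 1) → Option (Fin M)) : Prop :=
  (∀ n m, u n = some m → m ∈ cache n) ∧ (u 0 ≠ none → ∀ n, n ≠ 0 → u n = none)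

instance {N M : ℕ} (cache : Fin (N + 1) → Finset (Fin M)) :
    DecidablePred (Feasible cache) := by
  intro u; unfold Feasible; infer_instance

instance {N M : ℕ} (cache : Fin (N + 1) → Finset (Fin M)) :
    Nonempty {u : Fin (N + 1) → Option (Fin M) // Feasible cache u} :=
  ⟨⟨fun _ => none, by simp [Feasible]⟩⟩

/-- Queue `(n,m)` is served by action `u`. -/
def Served {N M : ℕ} (u : Fin (N + 1) → Option (Fin M)) (n : Fin (N + 1)) (m : Fin M) : Prop :=
  (n = 0 ∧ u 0 = some m) ∨ (n ≠ 0 ∧ (u 0 = some m ∨ u n = some m))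

instance {N M : ℕ} (u : Fin (N + 1) → Option (Fin M)) (n : Fin (N + 1)) (m : Fin M) :
    Decidable (Served u n m) := by unfold Served; infer_instance

/-- The queue transition map `T(Q,u,A)`. -/
def T {N M : ℕ} {cache : Fin (N + 1) → Finset (Fin M)} (bound : Idx cache → ℕ)
    (Q : Idx cache → ℕ) (u : Fin (N + 1) → Option (Fin M)) (A : Idx cache → ℕ) :
    Idx cache → ℕ := fun i =>
  if Served u i.val.1 i.val.2 then min (A i) (bound i) else min (Q i + A i) (bound i)

/-- The network power cost `p(u) = Σ_n p(n, u_n)` (with `p(n,0) = 0` for an idling BS). -/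
def pcost {N M : ℕ} (p : Fin (N + 1) → Fin M → ℝ) (u : Fin (N + 1) → Option (Fin M)) : ℝ :=
  ∑ n, (u n).elim 0 (p n)

/-- The sum request queue length `d(Q)`. -/
def dcost {N M : ℕ} {cache : Fin (N + 1) → Finset (Fin M)} (Q : Idx cache → ℕ) : ℝ :=
  ∑ i, (Q i : ℝ)

/-- The per-stage cost `g(Q,u) = d(Q) + w·p(u)`. -/
def gcost {N M : ℕ} (p : Fin (N + 1) → Fin M → ℝ) (w : ℝ)
    {cache : Fin (N + 1) → Finset (Fin M)}
    (Q : Idx cache → ℕ) (u : Fin (N + 1) → Option (Fin M)) : ℝ :=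
  dcost Q + w * pcost p u

/-- The state-action cost `J_V(Q,u) = g(Q,u) + Σ_{A∈𝒜} P(A)·V(T(Q,u,A))`. -/
def Jcost {N M : ℕ} (p : Fin (N + 1) → Fin M → ℝ) (w : ℝ)
    {cache : Fin (N + 1) → Finset (Fin M)} (bound : Idx cache → ℕ)
    {ι : Type} [Fintype ι] (P : ι → ℝ) (A : ι → Idx cache → ℕ)
    (V : (Idx cache → ℕ) → ℝ) (Q : Idx cache → ℕ)
    (u : Fin (N + 1) → Option (Fin M)) : ℝ :=
  gcost p w Q u + ∑ a, P a * V (T bound Q u (A a))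

open scoped Classical in
/-- `Φ_u(Q_{−n,−m})`: the set of queue lengths `q ∈ {0,…,N_{n,m}}` at coordinate `i = (n,m)`
such that action `u` dominates every other feasible action at the state obtained from `Q`
by replacing its `(n,m)`-coordinate with `q`.  Its `Finset.max` (valued in `WithBot ℕ`,
`⊥` = −∞) is `φ_u⁺(Q_{−n,−m})`, and its `Finset.min` (valued in `WithTop ℕ`, `⊤` = +∞)
is `φ_u⁻(Q_{−n,−m})`. -/
noncomputable def Phi {N M : ℕ} (p : Fin (N + 1) → Fin M → ℝ) (w : ℝ)
    {cache : Fin (N + 1) → Finset (Fin M)} (bound : Idx cache → ℕ)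
    {ι : Type} [Fintype ι] (P : ι → ℝ) (A : ι → Idx cache → ℕ)
    (V : (Idx cache → ℕ) → ℝ) (u : Fin (N + 1) → Option (Fin M))
    (i : Idx cache) (Q : Idx cache → ℕ) : Finset ℕ :=
  (Finset.range (bound i + 1)).filter fun q =>
    ∀ v, Feasible cache v → v ≠ u →
      Jcost p w bound P A V (Function.update Q i q) u -
        Jcost p w bound P A V (Function.update Q i q) v ≤ 0

/-- Theorem 2, Property 2, second part: monotonicity of the MBS threshold
of the suboptimal policy: with the additive separable approximation
`V̂(Q) = Σ V̂_{n,m}(Q_{n,m})` built from non-decreasing per-queue value functions, if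
`û* ∈ 𝒰` has `û*_0 = m ∈ M_0` and the partial states `Q¹_{−0,−m}, Q²_{−0,−m}` satisfy
`Q¹_{n,m} ≥ Q²_{n,m}` for every `n ∈ N_m` and agree on all other coordinates, then
`φ̂_{û*}⁻(Q¹_{−0,−m}) ≤ φ̂_{û*}⁻(Q²_{−0,−m})` in `{0,…,N_{0,m}} ∪ {+∞}`. -/
theorem suboptimal_MBS_threshold_monotone {N M : ℕ} (cache : Fin (N + 1) → Finset (Fin M))
    (hcache0 : ∀ m : Fin M, m ∈ cache 0)
    (bound : Idx cache → ℕ)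
    (p : Fin (N + 1) → Fin M → ℝ) (hp : ∀ n m, 0 ≤ p n m)
    (w : ℝ) (hw : 0 ≤ w)
    {ι : Type} [Fintype ι] (P : ι → ℝ) (A : ι → Idx cache → ℕ)
    (hP : ∀ a, 0 ≤ P a) (hPsum : ∑ a, P a = 1)
    (Vv : (i : Idx cache) → ℕ → ℝ)
    (hVv : ∀ i : Idx cache, ∀ q q' : ℕ, q ≤ q' → q' ≤ bound i → Vv i q ≤ Vv i q')
    (ustar : Fin (N + 1) → Option (Fin M)) (hustar : Feasible cache ustar)
    (m : Fin M) (hu0 : ustar 0 = some m)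
    (Q₁ Q₂ : Idx cache → ℕ)
    (hQ₁ : ∀ i, Q₁ i ≤ bound i) (hQ₂ : ∀ i, Q₂ i ≤ bound i)
    (hge : ∀ i : Idx cache, i.val.1 ≠ 0 → i.val.2 = m → Q₂ i ≤ Q₁ i)
    (heq : ∀ i : Idx cache, i.val ≠ ((0 : Fin (N + 1)), m) →
      ¬(i.val.1 ≠ 0 ∧ i.val.2 = m) → Q₁ i = Q₂ i) :
    (Phi p w bound P A (fun Q' => ∑ j, Vv j (Q' j)) ustar
        ⟨((0 : Fin (N + 1)), m), hcache0 m⟩ Q₁).min ≤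
      (Phi p w bound P A (fun Q' => ∑ j, Vv j (Q' j)) ustar
        ⟨((0 : Fin (N + 1)), m), hcache0 m⟩ Q₂).min := by
  classical
  set i₀ : Idx cache := ⟨((0 : Fin (N + 1)), m), hcache0 m⟩ with hi₀def
  apply Finset.min_mono
  intro q hq
  rw [Phi, Finset.mem_filter] at hq ⊢
  obtain ⟨hqr, hq2⟩ := hq
  refine ⟨hqr, fun v hv hvne => ?_⟩
  set R₁ : Idx cache → ℕ := Function.update Q₁ i₀ q with hR₁def
  set R₂ : Idx cache → ℕ := Function.update Q₂ i₀ q with hR₂def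
  -- pointwise inequality on value-function differences
  have key : ∀ (a : ι) (j : Idx cache),
      Vv j (T bound R₁ ustar (A a) j) - Vv j (T bound R₁ v (A a) j) ≤
      Vv j (T bound R₂ ustar (A a) j) - Vv j (T bound R₂ v (A a) j) := by
    intro a j
    by_cases hjm : j.val.1 ≠ 0 ∧ j.val.2 = m
    · have hji₀ : j ≠ i₀ := by
        intro h; apply hjm.1; rw [h]
      have hR1j : R₁ j = Q₁ j := Function.update_of_ne hji₀ _ _
      have hR2j : R₂ j = Q₂ j := Function.update_of_ne hji₀ _ _
      have hsu : Served ustar j.val.1 j.val.2 :=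
        Or.inr ⟨hjm.1, Or.inl (by rw [hjm.2]; exact hu0)⟩
      by_cases hsv : Served v j.val.1 j.val.2
      · simp [T, hsu, hsv]
      · have h1 : T bound R₁ ustar (A a) j = min (A a j) (bound j) := by
          simp [T, hsu]
        have h2 : T bound R₂ ustar (A a) j = min (A a j) (bound j) := by
          simp [T, hsu]
        have h3 : T bound R₁ v (A a) j = min (R₁ j + A a j) (bound j) := by
          simp [T, hsv]
        have h4 : T bound R₂ v (A a) j = min (R₂ j + A a j) (bound j) := by
          simp [T, hsv]
        rw [h1, h2, h3, h4, hR1j, hR2j]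
        have hmle : min (Q₂ j + A a j) (bound j) ≤ min (Q₁ j + A a j) (bound j) :=
          min_le_min (Nat.add_le_add_right (hge j hjm.1 hjm.2) _) le_rfl
        have := hVv j _ _ hmle (min_le_right _ _)
        linarith
    · have hRj : R₁ j = R₂ j := by
        by_cases hji₀ : j = i₀
        · rw [hji₀, hR₁def, hR₂def, Function.update_self, Function.update_self]
        · have hval : j.val ≠ ((0 : Fin (N + 1)), m) := by
            intro h; exact hji₀ (Subtype.ext h)
          rw [hR₁def, hR₂def, Function.update_of_ne hji₀, Function.update_of_ne hji₀]
          exact heq j hval hjm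
      have e1 : T bound R₁ ustar (A a) j = T bound R₂ ustar (A a) j := by
        simp [T, hRj]
      have e2 : T bound R₁ v (A a) j = T bound R₂ v (A a) j := by
        simp [T, hRj]
      rw [e1, e2]
  have ha : ∀ a : ι,
      P a * (∑ j, Vv j (T bound R₁ ustar (A a) j)) -
        P a * (∑ j, Vv j (T bound R₁ v (A a) j)) ≤
      P a * (∑ j, Vv j (T bound R₂ ustar (A a) j)) -
        P a * (∑ j, Vv j (T bound R₂ v (A a) j)) := by
    intro a
    rw [← mul_sub, ← mul_sub]
    refine mul_le_mul_of_nonneg_left ?_ (hP a)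
    rw [← Finset.sum_sub_distrib, ← Finset.sum_sub_distrib]
    exact Finset.sum_le_sum fun j _ => key a j
  have hS : (∑ a, P a * (∑ j, Vv j (T bound R₁ ustar (A a) j))) -
        (∑ a, P a * (∑ j, Vv j (T bound R₁ v (A a) j))) ≤
      (∑ a, P a * (∑ j, Vv j (T bound R₂ ustar (A a) j))) -
        (∑ a, P a * (∑ j, Vv j (T bound R₂ v (A a) j))) := by
    rw [← Finset.sum_sub_distrib, ← Finset.sum_sub_distrib]
    exact Finset.sum_le_sum fun a _ => ha a
  have h2 := hq2 v hv hvne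
  simp only [Jcost, gcost] at h2 ⊢
  linarith

end HetNet
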